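/- Let A be an invertible m×m tridiagonal matrix such that all trailing principal minors are nonzero. Then for i < j, (A^{-1})_{ij} = (A^{-1})_{ii} · ∏_{ξ=i+1}^{j} (−r_ξ / G_{ξ-1}), where r_ξ = A_{ξ-1,ξ} and G_{ξ-1} = E_ξ/E_{ξ+1} with E_k the trailing minor on rows/columns k..m. -/

import Mathlib

noncomputable def tri (p q r : ℕ → ℝ) (k n : ℕ) : Matrix (Fin n) (Fin n) ℝ :=
  Matrix.of fun i j =>
    if (i : ℕ) = j then q (k + i)
    else if (i : ℕ) = (j : ℕ) + 1 then p (k + i)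
    else if (j : ℕ) = (i : ℕ) + 1 then r (k + j)
    else 0

lemma succAbove_one_val (n : ℕ) (j : Fin (n+1)) :
    (((1 : Fin (n+2)).succAbove j) : ℕ) = if (j:ℕ) < 1 then (j:ℕ) else (j:ℕ)+1 := by
  unfold Fin.succAbove
  split <;> rename_i h <;> simp_all [Fin.lt_def]

lemma tri_det_rec (p q r : ℕ → ℝ) (k n : ℕ) :
    (tri p q r k (n + 2)).det =
      q k * (tri p q r (k + 1) (n + 1)).det
        - p (k + 1) * r (k + 1) * (tri p q r (k + 2) n).det := by
  rw [Matrix.det_succ_row_zero]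
  rw [Fin.sum_univ_succ, Fin.sum_univ_succ]
  have h0 : ∀ j : Fin n, (tri p q r k (n+2)) 0 j.succ.succ = 0 := by
    intro j
    simp [tri, Fin.ext_iff]
  have hz : ∑ j : Fin n, (-1 : ℝ) ^ ((j.succ.succ : Fin (n+2)) : ℕ) *
      (tri p q r k (n+2)) 0 j.succ.succ *
      ((tri p q r k (n+2)).submatrix Fin.succ j.succ.succ.succAbove).det = 0 := by
    apply Finset.sum_eq_zero
    intro j _
    rw [h0 j]; ring
  rw [hz, add_zero]
  have hsub0 : (tri p q r k (n+2)).submatrix Fin.succ ((0 : Fin (n+2)).succAbove)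
      = tri p q r (k+1) (n+1) := by
    ext i j
    simp only [Matrix.submatrix_apply, Fin.succAbove_zero, tri, Matrix.of_apply,
      Fin.val_succ]
    split_ifs <;> first | (congr 1; omega) | omega | rfl
  have hsub1 : ((tri p q r k (n+2)).submatrix Fin.succ ((1 : Fin (n+2)).succAbove)).det
      = p (k+1) * (tri p q r (k+2) n).det := by
    rw [Matrix.det_succ_column_zero, Fin.sum_univ_succ]
    have hcol : ∀ i : Fin n,
        ((tri p q r k (n+2)).submatrix Fin.succ ((1 : Fin (n+2)).succAbove)) i.succ 0 = 0 := by
      intro i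
      simp only [Matrix.submatrix_apply, tri, Matrix.of_apply, Fin.val_succ]
      rw [show (((1 : Fin (n+2)).succAbove 0) : ℕ) = 0 from by
        rw [succAbove_one_val]; simp]
      split_ifs <;> first | rfl | omega | tauto
    have hz2 : ∑ i : Fin n, (-1 : ℝ) ^ ((i.succ : Fin (n+1)) : ℕ) *
        ((tri p q r k (n+2)).submatrix Fin.succ ((1 : Fin (n+2)).succAbove)) i.succ 0 *
        (((tri p q r k (n+2)).submatrix Fin.succ ((1 : Fin (n+2)).succAbove)).submatrix
          i.succ.succAbove Fin.succ).det = 0 := by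
      apply Finset.sum_eq_zero
      intro i _
      rw [hcol i]; ring
    rw [hz2, add_zero]
    have h00 : ((tri p q r k (n+2)).submatrix Fin.succ ((1 : Fin (n+2)).succAbove)) 0 0
        = p (k+1) := by
      simp only [Matrix.submatrix_apply, tri, Matrix.of_apply, Fin.val_succ]
      rw [show (((1 : Fin (n+2)).succAbove 0) : ℕ) = 0 from by
        rw [succAbove_one_val]; simp]
      norm_num
    rw [h00]
    have hsub2 : (((tri p q r k (n+2)).submatrix Fin.succ ((1 : Fin (n+2)).succAbove)).submatrix
        (Fin.succAbove 0) Fin.succ) = tri p q r (k+2) n := by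
      ext i j
      simp only [Matrix.submatrix_apply, Fin.succAbove_zero, tri, Matrix.of_apply,
        Fin.val_succ]
      rw [show (((1 : Fin (n+2)).succAbove j.succ) : ℕ) = (j:ℕ)+2 from by
        rw [succAbove_one_val]; simp]
      split_ifs <;> first | (congr 1; omega) | omega | rfl
    rw [hsub2]
    norm_num
  simp only [Fin.succ_zero_eq_one]
  rw [hsub0, hsub1]
  have h00 : (tri p q r k (n+2)) 0 0 = q k := by simp [tri]
  have h01 : (tri p q r k (n+2)) 0 1 = r (k+1) := by
    simp only [tri, Matrix.of_apply]
    norm_num [Fin.val_one]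
  rw [h00, h01]
  simp only [Fin.val_zero, Fin.val_one, pow_zero, pow_one]
  ring

/-- Determinant of the trailing submatrix of `A` on rows and columns `k, …, m`
(`1`-based indexing; `trailingMinor A (m+1) = 1`). -/
noncomputable def trailingMinor {m : ℕ} (A : Matrix (Fin m) (Fin m) ℝ) (k : ℕ) : ℝ :=
  if h : 1 ≤ k ∧ k ≤ m + 1 then
    (A.submatrix
        (fun i : Fin (m + 1 - k) => (⟨k - 1 + i, by have := i.isLt; omega⟩ : Fin m))
        (fun i : Fin (m + 1 - k) => (⟨k - 1 + i, by have := i.isLt; omega⟩ : Fin m))).det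
  else 0

lemma tri_det_zero (p q r : ℕ → ℝ) (k : ℕ) : (tri p q r k 0).det = 1 := by
  simp [Matrix.det_fin_zero]

lemma tri_det_one (p q r : ℕ → ℝ) (k : ℕ) : (tri p q r k 1).det = q k := by
  simp [Matrix.det_fin_one, tri]

theorem stmt_6 (m : ℕ)
    (p q r : ℕ → ℝ) (A : Matrix (Fin m) (Fin m) ℝ)
    (hA : ∀ i j : Fin m, A i j =
      if (i : ℕ) = j then q ((i : ℕ) + 1)
      else if (i : ℕ) = (j : ℕ) + 1 then p ((i : ℕ) + 1)
      else if (j : ℕ) = (i : ℕ) + 1 then r ((j : ℕ) + 1)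
      else 0)
    (hE : ∀ k : ℕ, 1 ≤ k → k ≤ m + 1 → trailingMinor A k ≠ 0) :
    ∀ i j : Fin m, i < j →
      A⁻¹ i j = A⁻¹ i i *
        ∏ ξ ∈ Finset.Icc ((i : ℕ) + 2) ((j : ℕ) + 1),
          (-(r ξ) / (trailingMinor A ξ / trailingMinor A (ξ + 1))) := by
  intro i j hij
  have him := i.isLt
  have hjm := j.isLt
  have hijn : (i : ℕ) < (j : ℕ) := hij
  have hm : 1 ≤ m := by omega
  -- trailingMinor in terms of tri
  have hEt : ∀ k : ℕ, 1 ≤ k → k ≤ m + 1 →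
      trailingMinor A k = (tri p q r k (m + 1 - k)).det := by
    intro k h1 h2
    rw [trailingMinor, dif_pos ⟨h1, h2⟩]
    congr 1
    ext a b
    have ha := a.isLt
    have hb := b.isLt
    rw [Matrix.submatrix_apply, hA]
    simp only [tri, Matrix.of_apply]
    split_ifs <;> first | (congr 1; omega) | omega | rfl
  have Erec : ∀ k : ℕ, 1 ≤ k → k + 1 ≤ m →
      trailingMinor A k = q k * trailingMinor A (k + 1)
        - p (k + 1) * r (k + 1) * trailingMinor A (k + 2) := by
    intro k h1 h2
    rw [hEt k h1 (by omega), hEt (k+1) (by omega) (by omega),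
      hEt (k+2) (by omega) (by omega),
      show m + 1 - k = (m - 1 - k) + 2 by omega,
      show m + 1 - (k+1) = (m - 1 - k) + 1 by omega,
      show m + 1 - (k+2) = m - 1 - k by omega]
    exact tri_det_rec p q r k (m - 1 - k)
  have Em : trailingMinor A m = q m := by
    rw [hEt m (by omega) (by omega), show m + 1 - m = 1 by omega, tri_det_one]
  have Em1 : trailingMinor A (m+1) = 1 := by
    rw [hEt (m+1) (by omega) (by omega), show m + 1 - (m+1) = 0 by omega, tri_det_zero]
  -- invertibility
  have hdet : A.det ≠ 0 := by
    have h1 := hE 1 le_rfl (by omega)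
    rw [hEt 1 le_rfl (by omega), show m + 1 - 1 = m by omega] at h1
    have hAeq : A = tri p q r 1 m := by
      ext a b
      rw [hA]
      simp only [tri, Matrix.of_apply]
      split_ifs <;> first | (congr 1; omega) | omega | rfl
    rw [hAeq]
    exact h1
  have hsum : ∀ j' : Fin m, i ≠ j' → ∑ k, A⁻¹ i k * A k j' = 0 := by
    intro j' hne
    have h := congrFun (congrFun (Matrix.nonsing_inv_mul A
      (isUnit_iff_ne_zero.mpr hdet)) i) j'
    rw [Matrix.mul_apply, Matrix.one_apply_ne hne] at h
    exact h
  -- delta sums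
  have hdelta : ∀ (c : ℕ) (hc : c < m) (f : Fin m → ℝ),
      ∑ k : Fin m, (if (k : ℕ) = c then f k else 0) = f ⟨c, hc⟩ := by
    intro c hc f
    rw [Finset.sum_eq_single (⟨c, hc⟩ : Fin m)]
    · simp
    · intro b _ hb
      rw [if_neg]
      intro h
      exact hb (Fin.ext h)
    · simp
  have hdelta0 : ∀ (c : ℕ), m ≤ c → ∀ f : Fin m → ℝ,
      ∑ k : Fin m, (if (k : ℕ) = c then f k else 0) = 0 := by
    intro c hc f
    apply Finset.sum_eq_zero
    intro b _
    rw [if_neg]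
    have := b.isLt
    omega
  -- column decomposition
  have hAcol : ∀ (j' : Fin m), 1 ≤ (j' : ℕ) → ∀ (k : Fin m), A k j' =
      (if (k : ℕ) = (j' : ℕ) - 1 then r ((j' : ℕ) + 1) else 0)
      + (if (k : ℕ) = (j' : ℕ) then q ((j' : ℕ) + 1) else 0)
      + (if (k : ℕ) = (j' : ℕ) + 1 then p ((j' : ℕ) + 2) else 0) := by
    intro j' h1 k
    rw [hA]
    split_ifs <;> (try simp only [add_zero, zero_add]) <;>
      first | rfl | omega | (congr 1; omega)
  have hterm : ∀ (j' : Fin m), 1 ≤ (j' : ℕ) → ∀ (k : Fin m),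
      A⁻¹ i k * A k j' =
      (if (k : ℕ) = (j' : ℕ) - 1 then A⁻¹ i k * r ((j' : ℕ) + 1) else 0)
      + (if (k : ℕ) = (j' : ℕ) then A⁻¹ i k * q ((j' : ℕ) + 1) else 0)
      + (if (k : ℕ) = (j' : ℕ) + 1 then A⁻¹ i k * p ((j' : ℕ) + 2) else 0) := by
    intro j' h1 k
    rw [hAcol j' h1 k]
    split_ifs <;> ring
  have hsum3 : ∀ (j' : Fin m), i ≠ j' → 1 ≤ (j' : ℕ) →
      A⁻¹ i ⟨(j' : ℕ) - 1, by have := j'.isLt; omega⟩ * r ((j' : ℕ) + 1)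
        + A⁻¹ i j' * q ((j' : ℕ) + 1)
        + (∑ k : Fin m, (if (k : ℕ) = (j' : ℕ) + 1 then A⁻¹ i k * p ((j' : ℕ) + 2) else 0))
        = 0 := by
    intro j' hne h1
    have hs := hsum j' hne
    rw [Finset.sum_congr rfl (fun k _ => hterm j' h1 k), Finset.sum_add_distrib,
      Finset.sum_add_distrib,
      hdelta ((j' : ℕ) - 1) (by have := j'.isLt; omega)
        (fun k => A⁻¹ i k * r ((j' : ℕ) + 1)),
      hdelta (j' : ℕ) j'.isLt (fun k => A⁻¹ i k * q ((j' : ℕ) + 1))] at hs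
    convert hs using 3
  have hcolA : ∀ j' : Fin m, i ≠ j' → 1 ≤ (j' : ℕ) → ∀ (hlt : (j' : ℕ) + 1 < m),
      A⁻¹ i ⟨(j' : ℕ) - 1, by have := j'.isLt; omega⟩ * r ((j' : ℕ) + 1)
        + A⁻¹ i j' * q ((j' : ℕ) + 1)
        + A⁻¹ i ⟨(j' : ℕ) + 1, hlt⟩ * p ((j' : ℕ) + 2) = 0 := by
    intro j' hne h1 hlt
    have hs := hsum3 j' hne h1
    rw [hdelta ((j' : ℕ) + 1) hlt (fun k => A⁻¹ i k * p ((j' : ℕ) + 2))] at hs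
    exact hs
  have hcolB : ∀ j' : Fin m, i ≠ j' → 1 ≤ (j' : ℕ) → (j' : ℕ) + 1 = m →
      A⁻¹ i ⟨(j' : ℕ) - 1, by have := j'.isLt; omega⟩ * r ((j' : ℕ) + 1)
        + A⁻¹ i j' * q ((j' : ℕ) + 1) = 0 := by
    intro j' hne h1 hB
    have hs := hsum3 j' hne h1
    rw [hdelta0 ((j' : ℕ) + 1) (by omega) (fun k => A⁻¹ i k * p ((j' : ℕ) + 2)),
      add_zero] at hs
    exact hs
  -- base case of the downward recurrence
  have base : ∀ j' : Fin m, i < j' → (j' : ℕ) + 1 = m →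
      A⁻¹ i j' * trailingMinor A ((j' : ℕ) + 1)
        = -(r ((j' : ℕ) + 1)) * A⁻¹ i ⟨(j' : ℕ) - 1, by have := j'.isLt; omega⟩
            * trailingMinor A ((j' : ℕ) + 2) := by
    intro j' hij' hB
    have h1 : 1 ≤ (j' : ℕ) := by
      have : (i : ℕ) < (j' : ℕ) := hij'
      omega
    have hc := hcolB j' (ne_of_lt hij') h1 hB
    rw [show (j' : ℕ) + 2 = m + 1 by omega, show (j' : ℕ) + 1 = m from hB] at *
    rw [Em, Em1]
    linarith [hc]
  -- downward recurrence
  have key : ∀ t : ℕ, ∀ j' : Fin m, m - 1 - (j' : ℕ) ≤ t → i < j' →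
      A⁻¹ i j' * trailingMinor A ((j' : ℕ) + 1)
        = -(r ((j' : ℕ) + 1)) * A⁻¹ i ⟨(j' : ℕ) - 1, by have := j'.isLt; omega⟩
            * trailingMinor A ((j' : ℕ) + 2) := by
    intro t
    induction t with
    | zero =>
      intro j' ht hij'
      have hB : (j' : ℕ) + 1 = m := by have := j'.isLt; omega
      exact base j' hij' hB
    | succ t iht =>
      intro j' ht hij'
      by_cases hB : (j' : ℕ) + 1 = m
      · exact base j' hij' hB
      · have hlt : (j' : ℕ) + 1 < m := by have := j'.isLt; omega
        have h1 : 1 ≤ (j' : ℕ) := by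
          have : (i : ℕ) < (j' : ℕ) := hij'
          omega
        set jp1 : Fin m := ⟨(j' : ℕ) + 1, hlt⟩ with hjp1
        have hihyp := iht jp1 (by simp [hjp1]; omega)
          (by rw [Fin.lt_def]; simp [hjp1]; omega)
        have hjm1 : (⟨(jp1 : ℕ) - 1, by have := jp1.isLt; omega⟩ : Fin m) = j' := by
          apply Fin.ext
          simp [hjp1]
        rw [hjm1] at hihyp
        have hval : (jp1 : ℕ) = (j' : ℕ) + 1 := rfl
        rw [hval] at hihyp
        have hc := hcolA j' (ne_of_lt hij') h1 hlt
        have hrec := Erec ((j' : ℕ) + 1) (by omega) (by omega)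
        linear_combination (A⁻¹ i j') * hrec - p ((j' : ℕ) + 2) * hihyp
          + trailingMinor A ((j' : ℕ) + 2) * hc
  have hstep : ∀ (a b u v w : ℝ), v ≠ 0 → w ≠ 0 →
      a * v = -u * b * w → a = b * (-u / (v / w)) := by
    intro a b u v w hv hw h
    field_simp
    linear_combination h
  -- solve recurrence into a product
  have main : ∀ n : ℕ, ∀ j' : Fin m, (j' : ℕ) = (i : ℕ) + 1 + n →
      A⁻¹ i j' = A⁻¹ i i *
        ∏ ξ ∈ Finset.Icc ((i : ℕ) + 2) ((j' : ℕ) + 1),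
          (-(r ξ) / (trailingMinor A ξ / trailingMinor A (ξ + 1))) := by
    intro n
    induction n with
    | zero =>
      intro j' hj'
      have hk := key m j' (by omega) (by rw [Fin.lt_def]; omega)
      have hjm1 : (⟨(j' : ℕ) - 1, by have := j'.isLt; omega⟩ : Fin m) = i := by
        apply Fin.ext; simp; omega
      rw [hjm1] at hk
      rw [show (j' : ℕ) + 1 = (i : ℕ) + 2 by omega] at hk ⊢
      rw [show (j' : ℕ) + 2 = (i : ℕ) + 3 by omega] at hk
      rw [Finset.Icc_self, Finset.prod_singleton,
        show (i : ℕ) + 2 + 1 = (i : ℕ) + 3 by omega]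
      have h2 : trailingMinor A ((i : ℕ) + 2) ≠ 0 := by
        apply hE <;> omega
      have h3 : trailingMinor A ((i : ℕ) + 3) ≠ 0 := by
        apply hE <;> omega
      exact hstep _ _ _ _ _ h2 h3 hk
    | succ n ihn =>
      intro j' hj'
      have hjm1lt : (j' : ℕ) - 1 < m := by omega
      have hihyp := ihn ⟨(j' : ℕ) - 1, hjm1lt⟩ (by simp; omega)
      have hk := key m j' (by omega) (by rw [Fin.lt_def]; omega)
      simp only [show ((⟨(j' : ℕ) - 1, hjm1lt⟩ : Fin m) : ℕ) = (j' : ℕ) - 1 from rfl,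
        show (j' : ℕ) - 1 + 1 = (j' : ℕ) by omega] at hihyp
      have hsplit := Finset.prod_Icc_succ_top
        (show (i : ℕ) + 2 ≤ (j' : ℕ) + 1 by omega)
        (fun ξ => (-(r ξ) / (trailingMinor A ξ / trailingMinor A (ξ + 1))))
      rw [hsplit, ← mul_assoc, ← hihyp,
        show (j' : ℕ) + 1 + 1 = (j' : ℕ) + 2 by omega]
      have h2 : trailingMinor A ((j' : ℕ) + 1) ≠ 0 := by
        apply hE <;> omega
      have h3 : trailingMinor A ((j' : ℕ) + 2) ≠ 0 := by
        apply hE <;> omega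
      exact hstep _ _ _ _ _ h2 h3 hk
  exact main ((j : ℕ) - (i : ℕ) - 1) j (by omega)
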